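/- For positive integers r ≤ d, the formal power series G(x) = Σ_{s≥1} N_{d,r}(s) x^s satisfies G(x)·(1 − x − x^{d+1})·(1 − x) = x·(1 + (r−1)x^d − r·x^{d+1}), where N_{d,r}(s) = N_{d,1}(s) for 1 ≤ s ≤ d and N_{d,r}(s) = N_{d,1}(s) + (r−1)N_{d,1}(s−2d) for s ≥ d+1, and N_{d,1} satisfies N_{d,1}(t) = 1 for t ≤ 0, N_{d,1}(1) = 1, N_{d,1}(s) = N_{d,1}(s−1) + N_{d,1}(s−d−1) for s ≥ 2. -/

import Mathlib

open PowerSeries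

private lemma genfunc_aux1 (d : ℕ) (F : ℤ → ℤ)
    (h0 : ∀ t : ℤ, t ≤ 0 → F t = 1) (h1 : F 1 = 1)
    (hrec : ∀ s : ℤ, 2 ≤ s → F s = F (s - 1) + F (s - d - 1)) (hd : 1 ≤ d) :
    (PowerSeries.mk fun s : ℕ => if s = 0 then 0 else F s) * (1 - X - X ^ (d + 1)) =
      X * ∑ k ∈ Finset.range (d+1), X ^ k := by
  have e1 : (1 - X - X ^ (d+1) : ℤ⟦X⟧) = 1 - X ^ 1 - X ^ (d+1) := by rw [pow_one]
  have e2 : (X : ℤ⟦X⟧) * ∑ k ∈ Finset.range (d+1), (X:ℤ⟦X⟧) ^ k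
      = X ^ 1 * ∑ k ∈ Finset.range (d+1), (X:ℤ⟦X⟧) ^ k := by rw [pow_one]
  rw [e1, e2]
  ext n
  rw [mul_sub, mul_sub, mul_one]
  simp only [map_sub, coeff_mul_X_pow', coeff_X_pow_mul', coeff_mk, map_sum, coeff_X_pow,
    Finset.sum_ite_eq (Finset.range (d+1)), Finset.mem_range]
  obtain hn0 | hn1 | ⟨hn2, hnd⟩ | hnbig : n = 0 ∨ n = 1 ∨ (2 ≤ n ∧ n ≤ d + 1) ∨ d + 2 ≤ n := by
    omega
  · subst hn0; simp
  · subst hn1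
    rw [if_neg (by omega), if_pos le_rfl, if_pos rfl, if_neg (by omega), if_pos le_rfl,
      if_pos (by omega)]
    simpa using h1
  · rw [if_neg (by omega), if_pos (by omega), if_neg (by omega : ¬(n - 1 = 0))]
    have h2 : (if d + 1 ≤ n then if n - (d+1) = 0 then (0:ℤ) else F ↑(n - (d+1)) else 0) = 0 := by
      split_ifs with hA hB
      · rfl
      · omega
      · rfl
    rw [h2, if_pos (by omega : 1 ≤ n), if_pos (by omega : n - 1 < d + 1),
      show ((n-1:ℕ):ℤ) = (n:ℤ)-1 by omega, hrec n (by exact_mod_cast hn2),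
      h0 ((n:ℤ) - d - 1) (by omega)]
    ring
  · rw [if_neg (by omega), if_pos (by omega), if_neg (by omega : ¬(n - 1 = 0)),
      if_pos (by omega), if_neg (by omega : ¬(n - (d+1) = 0)), if_pos (by omega),
      if_neg (by omega)]
    rw [show ((n-1:ℕ):ℤ) = (n:ℤ)-1 by omega,
      show ((n-(d+1):ℕ):ℤ) = (n:ℤ)-d-1 by omega, hrec n (by omega)]
    ring

private lemma genfunc_aux2 (d r : ℕ) (hd : 1 ≤ d) (F : ℤ → ℤ) (Fr : ℕ → ℤ)
    (h0 : ∀ t : ℤ, t ≤ 0 → F t = 1)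
    (hFr1 : ∀ s : ℕ, 1 ≤ s → s ≤ d → Fr s = F s)
    (hFr2 : ∀ s : ℕ, d + 1 ≤ s → Fr s = F s + ((r : ℤ) - 1) * F ((s : ℤ) - 2 * d)) :
    (PowerSeries.mk fun s : ℕ => if s = 0 then 0 else Fr s) =
      (PowerSeries.mk fun s : ℕ => if s = 0 then 0 else F s)
        + ((r : ℤ⟦X⟧) - 1) * (X ^ (2*d) * (PowerSeries.mk fun s : ℕ => if s = 0 then 0 else F s)
            + X ^ (d+1) * ∑ k ∈ Finset.range d, X ^ k) := by
  have hC : ((r : ℤ⟦X⟧) - 1) = C ((r : ℤ) - 1) := by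
    simp [map_sub]
  rw [hC]
  ext n
  simp only [map_add, coeff_C_mul, coeff_X_pow_mul', coeff_mk, map_sum, coeff_X_pow,
    Finset.sum_ite_eq (Finset.range d), Finset.mem_range]
  obtain hn0 | ⟨hn1, hnd⟩ | ⟨hnd1, hn2d⟩ | hnbig :
      n = 0 ∨ (1 ≤ n ∧ n ≤ d) ∨ (d + 1 ≤ n ∧ n ≤ 2*d) ∨ 2*d + 1 ≤ n := by omega
  · subst hn0
    rw [if_pos rfl, if_pos rfl, if_neg (by omega), if_neg (by omega)]
    ring
  · rw [if_neg (by omega), if_neg (by omega), if_neg (by omega), if_neg (by omega),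
      hFr1 n hn1 hnd]
    ring
  · have h2 : (if 2*d ≤ n then if n - 2*d = 0 then (0:ℤ) else F ↑(n - 2*d) else 0) = 0 := by
      split_ifs with hA hB
      · rfl
      · omega
      · rfl
    rw [if_neg (by omega), if_neg (by omega), h2, if_pos (by omega), if_pos (by omega),
      hFr2 n (by omega), h0 ((n:ℤ) - 2*d) (by omega)]
    ring
  · rw [if_neg (by omega), if_neg (by omega), if_pos (by omega),
      if_neg (by omega : ¬(n - 2*d = 0)), if_pos (by omega), if_neg (by omega),
      hFr2 n (by omega), show ((n-2*d:ℕ):ℤ) = (n:ℤ)-2*d by omega]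
    ring

theorem genfunc_general (d r : ℕ) (hr : 0 < r) (hrd : r ≤ d) (F : ℤ → ℤ)
    (h0 : ∀ t : ℤ, t ≤ 0 → F t = 1) (h1 : F 1 = 1)
    (hrec : ∀ s : ℤ, 2 ≤ s → F s = F (s - 1) + F (s - d - 1))
    (Fr : ℕ → ℤ)
    (hFr1 : ∀ s : ℕ, 1 ≤ s → s ≤ d → Fr s = F s)
    (hFr2 : ∀ s : ℕ, d + 1 ≤ s → Fr s = F s + ((r : ℤ) - 1) * F ((s : ℤ) - 2 * d)) :
    (PowerSeries.mk fun s : ℕ => if s = 0 then 0 else Fr s) *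
        (1 - PowerSeries.X - PowerSeries.X ^ (d + 1)) * (1 - PowerSeries.X) =
      PowerSeries.X *
        (1 + ((r : PowerSeries ℤ) - 1) * PowerSeries.X ^ d
          - (r : PowerSeries ℤ) * PowerSeries.X ^ (d + 1)) := by
  have hd : 1 ≤ d := le_trans hr hrd
  have hA := genfunc_aux1 d F h0 h1 hrec hd
  have hB := genfunc_aux2 d r hd F Fr h0 hFr1 hFr2
  have key : (PowerSeries.mk fun s : ℕ => if s = 0 then 0 else F s) *
      (1 - X - X ^ (d + 1)) * (1 - X) = X * (1 - X ^ (d+1)) := by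
    rw [hA]
    linear_combination (-(X : ℤ⟦X⟧)) * geom_sum_mul (X : ℤ⟦X⟧) (d+1)
  have geom2 : (∑ k ∈ Finset.range d, (X:ℤ⟦X⟧) ^ k) * (1 - X) = 1 - X ^ d := by
    linear_combination (-1 : ℤ⟦X⟧) * geom_sum_mul (X : ℤ⟦X⟧) d
  rw [hB]
  linear_combination (1 + ((r : ℤ⟦X⟧) - 1) * X^(2*d)) * key
    + ((r : ℤ⟦X⟧) - 1) * X^(d+1) * (1 - X - X^(d+1)) * geom2
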